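/- Let M = (E, B) be a matroid of rank r on n elements. Then log₂ of the number of cells of the Dressian D(M) is at most |Z₁(M)|, where Z₁(M) is the set of symbols (S, ab, cd) with all six of Sab, Scd, Sac, Sbd, Sad, Sbc bases of M. Consequently log₂ #D(M) ≤ C(n, r−2)·C(n−r+2, 4)·6. -/

import Mathlib

/-- `ν : C(E,r) → ℝ∞` is (the extension of) a valuation of the matroid `(E, ℬ)`:
its finite support is exactly `ℬ` and it satisfies the valuated exchange axiom (V). -/
def IsValuationOf {α : Type*} [DecidableEq α] (E : Finset α) (r : ℕ)
    (ℬ : Finset (Finset α)) (ν : Finset α → WithTop ℝ) : Prop :=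
  (∀ B, ν B = ⊤ ↔ B ∉ ℬ) ∧
  ∀ B ∈ E.powersetCard r, ∀ B' ∈ E.powersetCard r, ∀ e ∈ B \ B',
    ∃ f ∈ B' \ B, ν (insert f (B.erase e)) + ν (insert e (B'.erase f)) ≤ ν B + ν B'

/-- Combinatorial equivalence of two valuations: at each symbol `(S, ab, cd)` the
three-term tropical Plücker relation degenerates in the same way. -/
def CombEquiv {α : Type*} [DecidableEq α] (E : Finset α) (r : ℕ)
    (ν ν' : Finset α → WithTop ℝ) : Prop :=
  ∀ S ∈ E.powersetCard (r - 2), ∀ a ∈ E \ S, ∀ b ∈ E \ S, ∀ c ∈ E \ S, ∀ d ∈ E \ S,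
    a ≠ b → a ≠ c → a ≠ d → b ≠ c → b ≠ d → c ≠ d →
    (ν (insert a (insert c S)) + ν (insert b (insert d S))
        = ν (insert a (insert d S)) + ν (insert b (insert c S)) ↔
     ν' (insert a (insert c S)) + ν' (insert b (insert d S))
        = ν' (insert a (insert d S)) + ν' (insert b (insert c S)))


open Finset

section Aux
variable {α : Type*} [DecidableEq α]

/-- The three-term equality at a symbol. -/
def Eqn (ν : Finset α → WithTop ℝ) (S : Finset α) (a b c d : α) : Prop :=
  ν (insert a (insert c S)) + ν (insert b (insert d S))
    = ν (insert a (insert d S)) + ν (insert b (insert c S))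

lemma eqn_swap_ab {ν : Finset α → WithTop ℝ} {S : Finset α} {a b c d : α}
    (h : Eqn ν S a b c d) : Eqn ν S b a c d := by
  unfold Eqn at h ⊢
  rw [add_comm, add_comm (ν (insert b (insert d S)))]
  exact h.symm

lemma eqn_swap_cd {ν : Finset α → WithTop ℝ} {S : Finset α} {a b c d : α}
    (h : Eqn ν S a b c d) : Eqn ν S a b d c := h.symm

lemma pair_cases {a b a' b' : α} (h : ({a, b} : Finset α) = {a', b'}) (hab : a ≠ b) :
    (a' = a ∧ b' = b) ∨ (a' = b ∧ b' = a) := by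
  have h1 : a' ∈ ({a, b} : Finset α) := by rw [h]; simp
  have h2 : b' ∈ ({a, b} : Finset α) := by rw [h]; simp
  have h3 : a ∈ ({a', b'} : Finset α) := by rw [← h]; simp
  have h4 : b ∈ ({a', b'} : Finset α) := by rw [← h]; simp
  simp only [mem_insert, mem_singleton] at h1 h2 h3 h4
  rcases h1 with h1 | h1 <;> rcases h2 with h2 | h2 <;> tauto

lemma insert2_mem_pc {E S : Finset α} {r : ℕ} (hr2 : 2 ≤ r)
    (hS : S ∈ E.powersetCard (r - 2)) {a d : α} (ha : a ∈ E \ S) (hd : d ∈ E \ S)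
    (had : a ≠ d) : insert a (insert d S) ∈ E.powersetCard r := by
  rw [mem_powersetCard] at hS ⊢
  obtain ⟨hSE, hScard⟩ := hS
  simp only [mem_sdiff] at ha hd
  constructor
  · exact insert_subset ha.1 (insert_subset hd.1 hSE)
  · rw [card_insert_of_notMem (by simp [had, ha.2]),
      card_insert_of_notMem hd.2, hScard]
    omega

/-- If all four "cross" sets are bases but one of `Sab`, `Scd` is not, then the three-term
relation degenerates to an equality of the two cross terms, for every valuation. -/
lemma eqn_of_degenerate {E : Finset α} {r : ℕ} {ℬ : Finset (Finset α)}
    {ν : Finset α → WithTop ℝ} (hν : IsValuationOf E r ℬ ν) (hr2 : 2 ≤ r)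
    {S : Finset α} (hS : S ∈ E.powersetCard (r - 2)) {a b c d : α}
    (ha : a ∈ E \ S) (hb : b ∈ E \ S) (hc : c ∈ E \ S) (hd : d ∈ E \ S)
    (hab : a ≠ b) (hac : a ≠ c) (had : a ≠ d) (hbc : b ≠ c) (hbd : b ≠ d) (hcd : c ≠ d)
    (h1 : insert a (insert b S) ∉ ℬ ∨ insert c (insert d S) ∉ ℬ)
    (hAC : insert a (insert c S) ∈ ℬ) (hBD : insert b (insert d S) ∈ ℬ)
    (hAD : insert a (insert d S) ∈ ℬ) (hBC : insert b (insert c S) ∈ ℬ) :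
    Eqn ν S a b c d := by
  obtain ⟨htop, hV⟩ := hν
  have ha' := ha; have hb' := hb; have hc' := hc; have hd' := hd
  simp only [mem_sdiff] at ha hb hc hd
  have hanotS : a ∉ S := ha.2
  -- the degenerate term is ⊤
  have hdeg : ν (insert a (insert b S)) + ν (insert c (insert d S)) = ⊤ := by
    rw [WithTop.add_eq_top]
    rcases h1 with h1 | h1
    · exact Or.inl ((htop _).2 h1)
    · exact Or.inr ((htop _).2 h1)
  have hACt : ν (insert a (insert c S)) ≠ ⊤ := fun h => (htop _).1 h hAC
  have hBDt : ν (insert b (insert d S)) ≠ ⊤ := fun h => (htop _).1 h hBD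
  have hADt : ν (insert a (insert d S)) ≠ ⊤ := fun h => (htop _).1 h hAD
  have hBCt : ν (insert b (insert c S)) ≠ ⊤ := fun h => (htop _).1 h hBC
  -- first inequality : ν Sbd + ν Sac ≤ ν Sad + ν Sbc
  have ineq1 : ν (insert a (insert c S)) + ν (insert b (insert d S))
      ≤ ν (insert a (insert d S)) + ν (insert b (insert c S)) := by
    obtain ⟨f, hf, hle⟩ := hV _ (insert2_mem_pc hr2 hS ha' hd' had)
      _ (insert2_mem_pc hr2 hS hb' hc' hbc) a
      (by simp [mem_sdiff, hanotS, hab, hac])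
    have hfbc : f = b ∨ f = c := by
      simp only [mem_sdiff, mem_insert] at hf
      rcases hf.1 with h | h | h
      · exact Or.inl h
      · exact Or.inr h
      · exact absurd (Or.inr (Or.inr h)) hf.2
    rw [erase_insert (by simp [had, hanotS])] at hle
    rcases hfbc with rfl | rfl
    · rw [erase_insert (by simp [hbc, hb.2])] at hle
      calc ν (insert a (insert c S)) + ν (insert f (insert d S))
          = ν (insert f (insert d S)) + ν (insert a (insert c S)) := add_comm _ _
        _ ≤ _ := hle
    · rw [Finset.insert_comm b f, erase_insert (by simp [Ne.symm hbc, hc.2])] at hle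
      exfalso
      have : ν (insert f (insert d S)) + ν (insert a (insert b S)) = ⊤ := by
        rw [WithTop.add_eq_top]
        rw [WithTop.add_eq_top] at hdeg
        rcases hdeg with h | h
        · exact Or.inr h
        · exact Or.inl h
      rw [this, top_le_iff, WithTop.add_eq_top] at hle
      rcases hle with h | h
      · exact hADt h
      · rw [Finset.insert_comm] at h; exact hBCt h
  -- second inequality : ν Sad + ν Sbc ≤ ν Sac + ν Sbd
  have ineq2 : ν (insert a (insert d S)) + ν (insert b (insert c S))
      ≤ ν (insert a (insert c S)) + ν (insert b (insert d S)) := by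
    obtain ⟨f, hf, hle⟩ := hV _ (insert2_mem_pc hr2 hS ha' hc' hac)
      _ (insert2_mem_pc hr2 hS hb' hd' hbd) a
      (by simp [mem_sdiff, hanotS, hab, had])
    have hfbd : f = b ∨ f = d := by
      simp only [mem_sdiff, mem_insert] at hf
      rcases hf.1 with h | h | h
      · exact Or.inl h
      · exact Or.inr h
      · exact absurd (Or.inr (Or.inr h)) hf.2
    rw [erase_insert (by simp [hac, hanotS])] at hle
    rcases hfbd with rfl | rfl
    · rw [erase_insert (by simp [hbd, hb.2])] at hle
      calc ν (insert a (insert d S)) + ν (insert f (insert c S))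
          = ν (insert f (insert c S)) + ν (insert a (insert d S)) := add_comm _ _
        _ ≤ _ := hle
    · rw [Finset.insert_comm b f, erase_insert (by simp [Ne.symm hbd, hd.2])] at hle
      exfalso
      have : ν (insert f (insert c S)) + ν (insert a (insert b S)) = ⊤ := by
        rw [WithTop.add_eq_top]
        rw [WithTop.add_eq_top] at hdeg
        rcases hdeg with h | h
        · exact Or.inr h
        · exact Or.inl (by rwa [Finset.insert_comm])
      rw [this, top_le_iff, WithTop.add_eq_top] at hle
      rcases hle with h | h
      · exact hACt h
      · rw [Finset.insert_comm] at h; exact hBDt h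
  exact le_antisymm ineq1 ineq2

/-- If not all six sets at a symbol are bases, the validity of the three-term equality is
determined by the matroid alone: any two valuations agree. -/
lemma eqn_determined {E : Finset α} {r : ℕ} {ℬ : Finset (Finset α)}
    {ν ν' : Finset α → WithTop ℝ} (hν : IsValuationOf E r ℬ ν)
    (hν' : IsValuationOf E r ℬ ν') (hr2 : 2 ≤ r)
    {S : Finset α} (hS : S ∈ E.powersetCard (r - 2)) {a b c d : α}
    (ha : a ∈ E \ S) (hb : b ∈ E \ S) (hc : c ∈ E \ S) (hd : d ∈ E \ S)
    (hab : a ≠ b) (hac : a ≠ c) (had : a ≠ d) (hbc : b ≠ c) (hbd : b ≠ d) (hcd : c ≠ d)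
    (hnot : ¬(insert a (insert b S) ∈ ℬ ∧ insert c (insert d S) ∈ ℬ ∧
      insert a (insert c S) ∈ ℬ ∧ insert b (insert d S) ∈ ℬ ∧
      insert a (insert d S) ∈ ℬ ∧ insert b (insert c S) ∈ ℬ)) :
    (Eqn ν S a b c d ↔ Eqn ν' S a b c d) := by
  have key : ∀ μ : Finset α → WithTop ℝ, IsValuationOf E r ℬ μ →
      (Eqn μ S a b c d ↔
        ((insert a (insert c S) ∉ ℬ ∨ insert b (insert d S) ∉ ℬ) ∧
          (insert a (insert d S) ∉ ℬ ∨ insert b (insert c S) ∉ ℬ)) ∨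
        (insert a (insert c S) ∈ ℬ ∧ insert b (insert d S) ∈ ℬ ∧
          insert a (insert d S) ∈ ℬ ∧ insert b (insert c S) ∈ ℬ)) := by
    intro μ hμ
    have htop := hμ.1
    by_cases hL : insert a (insert c S) ∉ ℬ ∨ insert b (insert d S) ∉ ℬ
    · have hLt : μ (insert a (insert c S)) + μ (insert b (insert d S)) = ⊤ := by
        rw [WithTop.add_eq_top]
        rcases hL with h | h
        · exact Or.inl ((htop _).2 h)
        · exact Or.inr ((htop _).2 h)
      unfold Eqn
      rw [hLt, eq_comm, WithTop.add_eq_top, htop _, htop _]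
      constructor
      · intro h
        exact Or.inl ⟨hL, h⟩
      · rintro (⟨-, h⟩ | ⟨h1, h2, -⟩)
        · exact h
        · exact absurd hL (by simp [h1, h2])
    · push_neg at hL
      have hLt : μ (insert a (insert c S)) + μ (insert b (insert d S)) ≠ ⊤ := by
        simp only [ne_eq, WithTop.add_eq_top]
        push_neg
        exact ⟨fun h => (htop _).1 h hL.1, fun h => (htop _).1 h hL.2⟩
      by_cases hR : insert a (insert d S) ∉ ℬ ∨ insert b (insert c S) ∉ ℬ
      · have hRt : μ (insert a (insert d S)) + μ (insert b (insert c S)) = ⊤ := by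
          rw [WithTop.add_eq_top]
          rcases hR with h | h
          · exact Or.inl ((htop _).2 h)
          · exact Or.inr ((htop _).2 h)
        unfold Eqn
        rw [hRt]
        constructor
        · intro h
          exact absurd h hLt
        · rintro (⟨h | h, -⟩ | ⟨h1, h2, h3, h4⟩)
          · exact absurd hL.1 h
          · exact absurd hL.2 h
          · exact absurd hR (by simp [h3, h4])
      · push_neg at hR
        have h1 : insert a (insert b S) ∉ ℬ ∨ insert c (insert d S) ∉ ℬ := by tauto
        constructor
        · intro _
          exact Or.inr ⟨hL.1, hL.2, hR.1, hR.2⟩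
        · intro _
          exact eqn_of_degenerate hμ hr2 hS ha hb hc hd hab hac had hbc hbd hcd h1
            hL.1 hL.2 hR.1 hR.2
  rw [key ν hν, key ν' hν']

end Aux

section Main
variable {α : Type*} [DecidableEq α]

lemma union_pair (S : Finset α) (a b : α) : S ∪ {a, b} = insert a (insert b S) := by
  rw [union_comm, insert_union]; rfl

lemma gcond_iff {ν : Finset α → WithTop ℝ} {S : Finset α} {a b c d : α}
    (hab : a ≠ b) (hcd : c ≠ d) :
    (∀ a' b' c' d' : α, ({a, b} : Finset α) = {a', b'} → ({c, d} : Finset α) = {c', d'} →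
      a' ≠ b' → c' ≠ d' → Eqn ν S a' b' c' d') ↔ Eqn ν S a b c d := by
  constructor
  · intro h
    exact h a b c d rfl rfl hab hcd
  · intro h a' b' c' d' hP hQ h1 h2
    rcases pair_cases hP hab with ⟨rfl, rfl⟩ | ⟨rfl, rfl⟩ <;>
      rcases pair_cases hQ hcd with ⟨rfl, rfl⟩ | ⟨rfl, rfl⟩
    · exact h
    · exact eqn_swap_cd h
    · exact eqn_swap_ab h
    · exact eqn_swap_ab (eqn_swap_cd h)

/-- The key lemma: if two valuations degenerate in the same way at every symbol of
`Z₁(M)` (all six sets bases), they are combinatorially equivalent. -/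
lemma combEquiv_of_agree {E : Finset α} {r : ℕ} {ℬ : Finset (Finset α)} (hr2 : 2 ≤ r)
    {ν ν' : Finset α → WithTop ℝ} (hν : IsValuationOf E r ℬ ν)
    (hν' : IsValuationOf E r ℬ ν')
    (hagree : ∀ S ∈ E.powersetCard (r - 2), ∀ a ∈ E \ S, ∀ b ∈ E \ S, ∀ c ∈ E \ S,
      ∀ d ∈ E \ S, a ≠ b → a ≠ c → a ≠ d → b ≠ c → b ≠ d → c ≠ d →
      insert a (insert b S) ∈ ℬ → insert c (insert d S) ∈ ℬ →
      insert a (insert c S) ∈ ℬ → insert b (insert d S) ∈ ℬ →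
      insert a (insert d S) ∈ ℬ → insert b (insert c S) ∈ ℬ →
      (Eqn ν S a b c d ↔ Eqn ν' S a b c d)) :
    CombEquiv E r ν ν' := by
  intro S hS a ha b hb c hc d hd hab hac had hbc hbd hcd
  show Eqn ν S a b c d ↔ Eqn ν' S a b c d
  by_cases hall : insert a (insert b S) ∈ ℬ ∧ insert c (insert d S) ∈ ℬ ∧
      insert a (insert c S) ∈ ℬ ∧ insert b (insert d S) ∈ ℬ ∧
      insert a (insert d S) ∈ ℬ ∧ insert b (insert c S) ∈ ℬ
  · exact hagree S hS a ha b hb c hc d hd hab hac had hbc hbd hcd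
      hall.1 hall.2.1 hall.2.2.1 hall.2.2.2.1 hall.2.2.2.2.1 hall.2.2.2.2.2
  · exact eqn_determined hν hν' hr2 hS ha hb hc hd hab hac had hbc hbd hcd hall

end Main

/-- The number of cells of the Dressian of a matroid `M = (E, ℬ)` of rank `r` on `n`
elements (= the number of combinatorial equivalence classes of valuations of `M`) is at
most `2^{|Z₁(M)|}`, where `Z₁(M)` is the set of symbols `(S, ab, cd)` all six of whose
associated `r`-sets are bases; consequently it is at most
`2^{C(n,r−2)·C(n−r+2,4)·6}`. -/
theorem card_dressian_cells_le {α : Type*} [DecidableEq α]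
    (E : Finset α) (n r : ℕ) (hn : E.card = n) (hr2 : 2 ≤ r) (hrn : r ≤ n)
    (ℬ : Finset (Finset α)) (hBE : ∀ B ∈ ℬ, B ∈ E.powersetCard r) (hBne : ℬ.Nonempty)
    (hexch : ∀ B ∈ ℬ, ∀ B' ∈ ℬ, ∀ e ∈ B \ B', ∃ f ∈ B' \ B,
      insert f (B.erase e) ∈ ℬ ∧ insert e (B'.erase f) ∈ ℬ) :
    let Z₁ := ((E.powersetCard (r - 2)) ×ˢ ((E.powersetCard 2) ×ˢ (E.powersetCard 2))).filter
      (fun x => x.2.1 ⊆ E \ x.1 ∧ x.2.2 ⊆ E \ x.1 ∧ Disjoint x.2.1 x.2.2 ∧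
        x.1 ∪ x.2.1 ∈ ℬ ∧ x.1 ∪ x.2.2 ∈ ℬ ∧
        ∀ a ∈ x.2.1, ∀ c ∈ x.2.2, x.1 ∪ {a, c} ∈ ℬ)
    Nat.card (Quot (fun (ν ν' : {ν : Finset α → WithTop ℝ // IsValuationOf E r ℬ ν}) =>
        CombEquiv E r ν.1 ν'.1)) ≤ 2 ^ Z₁.card ∧
    Nat.card (Quot (fun (ν ν' : {ν : Finset α → WithTop ℝ // IsValuationOf E r ℬ ν}) =>
        CombEquiv E r ν.1 ν'.1)) ≤ 2 ^ (n.choose (r - 2) * (n - r + 2).choose 4 * 6) := by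
  intro Z₁
  classical
  -- unpack membership in Z₁
  have unpack : ∀ x : Finset α × Finset α × Finset α, x ∈ Z₁ →
      ∃ a b c d : α, x.2.1 = {a, b} ∧ x.2.2 = {c, d} ∧
        x.1 ∈ E.powersetCard (r - 2) ∧
        a ∈ E \ x.1 ∧ b ∈ E \ x.1 ∧ c ∈ E \ x.1 ∧ d ∈ E \ x.1 ∧
        a ≠ b ∧ a ≠ c ∧ a ≠ d ∧ b ≠ c ∧ b ≠ d ∧ c ≠ d ∧
        insert a (insert b x.1) ∈ ℬ ∧ insert c (insert d x.1) ∈ ℬ ∧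
        insert a (insert c x.1) ∈ ℬ ∧ insert b (insert d x.1) ∈ ℬ ∧
        insert a (insert d x.1) ∈ ℬ ∧ insert b (insert c x.1) ∈ ℬ := by
    rintro ⟨S, P, Q⟩ hx
    obtain ⟨hmem, hPE, hQE, hdisj, hPB, hQB, hcross⟩ := Finset.mem_filter.mp hx
    obtain ⟨hS, hPQmem⟩ := Finset.mem_product.mp hmem
    obtain ⟨hP, hQ⟩ := Finset.mem_product.mp hPQmem
    obtain ⟨a, b, hab, rfl⟩ := Finset.card_eq_two.mp (Finset.mem_powersetCard.mp hP).2
    obtain ⟨c, d, hcd, rfl⟩ := Finset.card_eq_two.mp (Finset.mem_powersetCard.mp hQ).2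
    have haP : a ∈ ({a, b} : Finset α) := by simp
    have hbP : b ∈ ({a, b} : Finset α) := by simp
    have hcQ : c ∈ ({c, d} : Finset α) := by simp
    have hdQ : d ∈ ({c, d} : Finset α) := by simp
    have hdj := Finset.disjoint_left.mp hdisj
    refine ⟨a, b, c, d, rfl, rfl, hS, hPE haP, hPE hbP, hQE hcQ, hQE hdQ, hab,
      fun h => hdj haP (h ▸ hcQ), fun h => hdj haP (h ▸ hdQ),
      fun h => hdj hbP (h ▸ hcQ), fun h => hdj hbP (h ▸ hdQ), hcd,
      ?_, ?_, ?_, ?_, ?_, ?_⟩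
    · rw [← union_pair]; exact hPB
    · rw [← union_pair]; exact hQB
    · rw [← union_pair]; exact hcross a haP c hcQ
    · rw [← union_pair]; exact hcross b hbP d hdQ
    · rw [← union_pair]; exact hcross a haP d hdQ
    · rw [← union_pair]; exact hcross b hbP c hcQ
  -- the invariant map to functions Z₁ → Prop
  set g : {ν : Finset α → WithTop ℝ // IsValuationOf E r ℬ ν} → (↥Z₁ → Prop) :=
    fun ν x => ∀ a b c d : α, x.1.2.1 = {a, b} → x.1.2.2 = {c, d} → a ≠ b → c ≠ d →
      Eqn ν.1 x.1.1 a b c d with hgdef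
  have hwd : ∀ ν ν' : {ν : Finset α → WithTop ℝ // IsValuationOf E r ℬ ν},
      CombEquiv E r ν.1 ν'.1 → g ν = g ν' := by
    intro ν ν' hcomb
    funext x
    apply propext
    obtain ⟨a, b, c, d, hP, hQ, hS, ha, hb, hc, hd, hab, hac, had, hbc, hbd, hcd,
      h1, h2, h3, h4, h5, h6⟩ := unpack x.1 x.2
    have e1 : g ν x ↔ Eqn ν.1 x.1.1 a b c d := by
      rw [hgdef]; simp only; rw [hP, hQ]; exact gcond_iff hab hcd
    have e2 : g ν' x ↔ Eqn ν'.1 x.1.1 a b c d := by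
      rw [hgdef]; simp only; rw [hP, hQ]; exact gcond_iff hab hcd
    rw [e1, e2]
    exact hcomb x.1.1 hS a ha b hb c hc d hd hab hac had hbc hbd hcd
  set F : Quot (fun (ν ν' : {ν : Finset α → WithTop ℝ // IsValuationOf E r ℬ ν}) =>
      CombEquiv E r ν.1 ν'.1) → (↥Z₁ → Prop) := Quot.lift g hwd with hFdef
  have hinj : Function.Injective F := by
    intro q q'
    induction q using Quot.ind with | _ ν =>
    induction q' using Quot.ind with | _ ν' =>
    intro h
    have hg : g ν = g ν' := h
    apply Quot.sound
    apply combEquiv_of_agree hr2 ν.2 ν'.2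
    intro S hS a ha b hb c hc d hd hab hac had hbc hbd hcd h1 h2 h3 h4 h5 h6
    have hxZ : (S, ({a, b} : Finset α), ({c, d} : Finset α)) ∈ Z₁ := by
      refine Finset.mem_filter.mpr ⟨Finset.mem_product.mpr ⟨hS, Finset.mem_product.mpr
        ⟨?_, ?_⟩⟩, ?_, ?_, ?_, ?_, ?_, ?_⟩
      · rw [Finset.mem_powersetCard]
        refine ⟨?_, ?_⟩
        · exact insert_subset (Finset.mem_sdiff.mp ha).1
            (Finset.singleton_subset_iff.mpr (Finset.mem_sdiff.mp hb).1)
        · rw [Finset.card_insert_of_notMem (by simp [hab]), Finset.card_singleton]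
      · rw [Finset.mem_powersetCard]
        refine ⟨?_, ?_⟩
        · exact insert_subset (Finset.mem_sdiff.mp hc).1
            (Finset.singleton_subset_iff.mpr (Finset.mem_sdiff.mp hd).1)
        · rw [Finset.card_insert_of_notMem (by simp [hcd]), Finset.card_singleton]
      · exact insert_subset ha (Finset.singleton_subset_iff.mpr hb)
      · exact insert_subset hc (Finset.singleton_subset_iff.mpr hd)
      · rw [Finset.disjoint_left]
        intro y hy hy'
        simp only [Finset.mem_insert, Finset.mem_singleton] at hy hy'
        rcases hy with rfl | rfl <;> rcases hy' with rfl | rfl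
        · exact hac rfl
        · exact had rfl
        · exact hbc rfl
        · exact hbd rfl
      · rw [union_pair]; exact h1
      · rw [union_pair]; exact h2
      · intro a' ha' c' hc'
        simp only [Finset.mem_insert, Finset.mem_singleton] at ha' hc'
        rcases ha' with rfl | rfl <;> rcases hc' with rfl | rfl <;>
          rw [union_pair] <;> assumption
    have hx := congrFun hg (⟨(S, {a, b}, {c, d}), hxZ⟩ : ↥Z₁)
    have e1 := (gcond_iff (ν := ν.1) (S := S) hab hcd)
    have e2 := (gcond_iff (ν := ν'.1) (S := S) hab hcd)
    rw [← e1, ← e2]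
    exact iff_of_eq hx
  have hb1 : Nat.card (Quot (fun (ν ν' : {ν : Finset α → WithTop ℝ //
      IsValuationOf E r ℬ ν}) => CombEquiv E r ν.1 ν'.1)) ≤ 2 ^ Z₁.card := by
    calc Nat.card _ ≤ Nat.card (↥Z₁ → Prop) := Nat.card_le_card_of_injective F hinj
      _ = 2 ^ Z₁.card := by
          rw [Nat.card_eq_fintype_card, Fintype.card_fun, Fintype.card_prop,
            Fintype.card_coe]
  refine ⟨hb1, le_trans hb1 (Nat.pow_le_pow_right (by norm_num) ?_)⟩
  -- counting : |Z₁| ≤ C(n, r-2) * C(n-r+2, 4) * 6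
  have hsub : Z₁.card ≤ ((E.powersetCard (r - 2)).sigma
      (fun S => ((E \ S).powersetCard 4).sigma (fun F => F.powersetCard 2))).card := by
    apply Finset.card_le_card_of_injOn
      (fun x => ⟨x.1, x.2.1 ∪ x.2.2, x.2.1⟩)
    · intro x hx
      obtain ⟨hmem, hPE, hQE, hdisj, -⟩ := Finset.mem_filter.mp hx
      obtain ⟨hS, hPQmem⟩ := Finset.mem_product.mp hmem
      obtain ⟨hP, hQ⟩ := Finset.mem_product.mp hPQmem
      rw [Finset.mem_coe, Finset.mem_sigma]
      refine ⟨hS, ?_⟩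
      rw [Finset.mem_sigma]
      refine ⟨?_, ?_⟩
      · rw [Finset.mem_powersetCard]
        refine ⟨Finset.union_subset hPE hQE, ?_⟩
        rw [Finset.card_union_of_disjoint hdisj,
          (Finset.mem_powersetCard.mp hP).2, (Finset.mem_powersetCard.mp hQ).2]
      · rw [Finset.mem_powersetCard]
        exact ⟨Finset.subset_union_left, (Finset.mem_powersetCard.mp hP).2⟩
    · rintro ⟨S, P, Q⟩ hx ⟨S', P', Q'⟩ hy h
      obtain ⟨h1, h23⟩ := Sigma.mk.inj_iff.mp h
      obtain ⟨h2, h3⟩ := Sigma.mk.inj_iff.mp (eq_of_heq h23)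
      have h3 := eq_of_heq h3
      obtain ⟨-, -, -, hdx, -⟩ := Finset.mem_filter.mp hx
      obtain ⟨-, -, -, hdy, -⟩ := Finset.mem_filter.mp hy
      dsimp only at h1 h2 h3 hdx hdy
      have hQ : Q = Q' := by
        calc Q = (P ∪ Q) \ P := (Finset.union_sdiff_cancel_left hdx).symm
          _ = (P' ∪ Q') \ P' := by rw [h2, h3]
          _ = Q' := Finset.union_sdiff_cancel_left hdy
      simp only [Prod.mk.injEq]
      exact ⟨h1, h3, hQ⟩
  have hcount : ((E.powersetCard (r - 2)).sigma
      (fun S => ((E \ S).powersetCard 4).sigma (fun F => F.powersetCard 2))).card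
      = n.choose (r - 2) * ((n - r + 2).choose 4 * 6) := by
    rw [Finset.card_sigma]
    have step1 : ∀ S ∈ E.powersetCard (r - 2),
        (((E \ S).powersetCard 4).sigma (fun F => F.powersetCard 2)).card
          = (n - r + 2).choose 4 * 6 := by
      intro S hS
      obtain ⟨hSE, hScard⟩ := Finset.mem_powersetCard.mp hS
      have hEcard : (E \ S).card = n - r + 2 := by
        rw [Finset.card_sdiff_of_subset hSE, hScard, hn]; omega
      rw [Finset.card_sigma]
      have : ∀ F ∈ (E \ S).powersetCard 4, (F.powersetCard 2).card = 6 := by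
        intro F hF
        rw [Finset.card_powersetCard, (Finset.mem_powersetCard.mp hF).2]
        rfl
      rw [Finset.sum_congr rfl this, Finset.sum_const, Finset.card_powersetCard,
        hEcard, smul_eq_mul]
    rw [Finset.sum_congr rfl step1, Finset.sum_const, Finset.card_powersetCard,
      smul_eq_mul, hn]
  rw [mul_assoc]
  rw [hcount] at hsub
  exact hsub
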